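/- Let (A,+) be a cancellative semigroup and X, Y ⊆ A such that X is non-empty and the subsemigroup ⟨Y⟩ generated by Y is commutative. Then |X + Y| ≥ min(γ(Y), |X| + |Y| − 1). -/

import Mathlib

open scoped Pointwise Classical
open AddSubsemigroup

namespace CD

variable {A : Type*} [AddSemigroup A]

/-- An element `z` is cancellable if both translation maps are injective. -/
def Cancellable (z : A) : Prop :=
  Function.Injective (fun x : A => x + z) ∧ Function.Injective (fun x : A => z + x)

/-- `e` is a two-sided identity of the semigroup. -/
def IsIdentity (e : A) : Prop := ∀ x : A, x + e = x ∧ e + x = x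

/-- `u` is a unit: there is a two-sided identity and a two-sided inverse of `u`. -/
def IsUnitElem (u : A) : Prop := ∃ e v : A, IsIdentity e ∧ u + v = e ∧ v + u = e

/-- The inverse of a unit (junk value otherwise). -/
noncomputable def neg (u : A) : A :=
  if h : IsUnitElem u then h.choose_spec.choose else u

/-- `ord a` is the cardinality of the subsemigroup generated by `a`. -/
noncomputable def ord (a : A) : ℕ∞ := (closure {a} : Set A).encard

/-- The units of `A` lying in `W`. -/
def unitsIn (W : Set A) : Set A := {w ∈ W | IsUnitElem w}

/-- A set is commutative if its elements pairwise commute. -/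
def CommOn (S : Set A) : Prop := ∀ a ∈ S, ∀ b ∈ S, a + b = b + a

/-- The Cauchy-Davenport constant of a set. -/
noncomputable def gamma (X : Set A) : ℕ∞ :=
  if X.encard ≤ 1 then X.encard
  else ⨆ x₀ ∈ unitsIn X, ⨅ x ∈ {x ∈ X | x ≠ x₀}, ord (x + neg x₀)

/-- The sumset `X 0 + X 1 + ⋯ + X n` of a tuple of sets. -/
def sumsetTup : (n : ℕ) → (Fin (n + 1) → Set A) → Set A
  | 0, X => X 0
  | n + 1, X => sumsetTup n (fun i => X i.castSucc) + X (Fin.last (n + 1))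

/-- The sum `x 0 + x 1 + ⋯ + x n` of a tuple of elements. -/
def sumTup : (n : ℕ) → (Fin (n + 1) → A) → A
  | 0, x => x 0
  | n + 1, x => sumTup n (fun i => x i.castSucc) + x (Fin.last (n + 1))

/-- `nfold n a` is the `(n+1)`-fold sum `a + a + ⋯ + a`. -/
def nfold : ℕ → A → A
  | 0, a => a
  | n + 1, a => nfold n a + a

/-- `⟨⟨W⟩⟩`, the subsemigroup generated by `W` together with the inverses of its units. -/
noncomputable def dclosure (W : Set A) : Set A :=
  (closure (W ∪ neg '' unitsIn W) : Set A)

/-- `Ỹ_z = {y ∈ Y : z ∈ X + Y + y}`. -/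
noncomputable def Ytil (X Y : Set A) (z : A) : Set A := {y ∈ Y | z ∈ X + Y + {y}}

/-- `z − W = {w : z ∈ w + W}`. -/
def subFrom (z : A) (W : Set A) : Set A := {w : A | ∃ u ∈ W, w + u = z}

end CD

open CD

section CDProof

open CD Set

variable {A : Type*} [AddSemigroup A] [IsCancelAdd A]

private lemma CD_core (e : A) (he : IsIdentity e) (m : ℕ∞) :
    ∀ n : ℕ, ∀ X Y : Set A, X.Finite → Y.Finite → X.Nonempty → e ∈ Y →
      Y.ncard ≤ n → (∀ a ∈ Y, ∀ b ∈ Y, a + b = b + a) →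
      (∀ y ∈ Y, y ≠ e → m ≤ ord y) →
      min m (↑(X.ncard + Y.ncard - 1)) ≤ (X + Y).encard := by
  intro n
  induction n with
  | zero =>
      intro X Y hXf hYf hXne heY hn hcm hord
      have : Y.ncard = 0 := Nat.le_zero.mp hn
      rw [Set.ncard_eq_zero hYf] at this
      exact absurd heY (this ▸ Set.notMem_empty e)
  | succ n ih =>
      intro X Y hXf hYf hXne heY hn hcm hord
      have hYne : Y.Nonempty := ⟨e, heY⟩
      have hXYne : (X + Y).Nonempty := hXne.add hYne
      by_cases hYe : Y = {e}
      · subst hYe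
        have hXe : X + ({e} : Set A) = X := by
          ext z
          rw [Set.mem_add]
          constructor
          · rintro ⟨x, hx, y, hy, rfl⟩
            rw [Set.mem_singleton_iff] at hy
            subst hy
            rwa [(he x).1]
          · intro hz
            exact ⟨z, hz, e, rfl, (he z).1⟩
        rw [hXe, Set.ncard_singleton]
        have h1 : X.ncard + 1 - 1 = X.ncard := by omega
        rw [h1, hXf.cast_ncard_eq]
        exact min_le_right _ _
      · have hY1 : (Y \ {e}).Nonempty := by
          by_contra hcon
          rw [Set.not_nonempty_iff_eq_empty, Set.diff_eq_empty] at hcon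
          rcases Set.subset_singleton_iff_eq.mp hcon with h | h
          · exact hYne.ne_empty h
          · exact hYe h
        obtain ⟨y₁, hy₁Y, hy₁ne⟩ := hY1
        rw [Set.mem_singleton_iff] at hy₁ne
        by_cases hcl : ∀ y ∈ Y, ∀ z ∈ X + Y, z + y ∈ X + Y
        · -- closed case: X+Y contains a translate of ⟨y₁⟩
          obtain ⟨z₀, hz₀⟩ := hXYne
          have key : ∀ w ∈ AddSubsemigroup.closure {y₁}, ∀ z ∈ X + Y, z + w ∈ X + Y := by
            intro w hw
            induction hw using AddSubsemigroup.closure_induction with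
            | mem x hx =>
                rw [Set.mem_singleton_iff] at hx
                subst hx
                exact hcl _ hy₁Y
            | add a b ha hb pa pb =>
                intro z hz
                have h1 := pa z hz
                have h2 := pb _ h1
                rwa [add_assoc] at h2
          have hsub : (fun w => z₀ + w) '' (AddSubsemigroup.closure {y₁} : Set A) ⊆ X + Y := by
            rintro _ ⟨w, hw, rfl⟩
            exact key w hw z₀ hz₀
          have hord1 : ord y₁ ≤ (X + Y).encard := by
            rw [ord, ← (add_right_injective z₀).encard_image _]
            exact Set.encard_mono hsub
          exact le_trans (min_le_left _ _) (le_trans (hord y₁ hy₁Y hy₁ne) hord1)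
        · push_neg at hcl
          obtain ⟨yb, hybY, zb, hzb, hzout⟩ := hcl
          set z₀ := zb + yb with hz₀def
          set T := {y ∈ Y | ∃ w ∈ X + Y, w + y = z₀} with hT
          have hybT : yb ∈ T := ⟨hybY, zb, hzb, rfl⟩
          have hTf : T.Finite := hYf.subset (Set.sep_subset _ _)
          have heT : e ∉ T := by
            rintro ⟨-, w, hw, hwe⟩
            rw [(he w).1] at hwe
            exact hzout (hwe ▸ hw)
          set Y' := Y \ T with hY'def
          have heY' : e ∈ Y' := ⟨heY, heT⟩
          have hY'f : Y'.Finite := hYf.subset Set.diff_subset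
          have hsum : Y'.ncard + T.ncard = Y.ncard :=
            Set.ncard_diff_add_ncard_of_subset (Set.sep_subset _ _) hYf
          have hT1 : 1 ≤ T.ncard := by
            have := (Set.ncard_pos hTf).mpr ⟨yb, hybT⟩
            omega
          have hIH := ih X Y' hXf hY'f hXne heY' (by omega)
            (fun a ha b hb => hcm a ha.1 b hb.1)
            (fun y hy hne => hord y hy.1 hne)
          -- the reflected elements
          set f : A → A := fun y =>
            if h : ∃ w, w ∈ X + Y ∧ w + y = z₀ then h.choose else y with hf
          have hfspec : ∀ y ∈ T, f y ∈ X + Y ∧ f y + y = z₀ := by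
            intro y hy
            obtain ⟨-, w, hw, hwy⟩ := hy
            have hex : ∃ w, w ∈ X + Y ∧ w + y = z₀ := ⟨w, hw, hwy⟩
            simp only [hf, dif_pos hex]
            exact hex.choose_spec
          have hfinj : Set.InjOn f T := by
            intro a ha b hb hab
            have h1 := hfspec a ha
            have h2 := hfspec b hb
            apply add_left_cancel (a := f a)
            rw [h1.2, hab, h2.2]
          have hdisj : Disjoint (X + Y') (f '' T) := by
            rw [Set.disjoint_right]
            rintro _ ⟨y, hyT, rfl⟩ hmem
            rw [Set.mem_add] at hmem
            obtain ⟨a, ha, b, hb, hab⟩ := hmem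
            have h1 := hfspec y hyT
            have hkey : (a + y) + b = z₀ := by
              rw [← h1.2, ← hab, add_assoc, add_assoc, hcm b hb.1 y hyT.1]
            exact hb.2 ⟨hb.1, a + y, Set.add_mem_add ha hyT.1, hkey⟩
          have hsubU : (X + Y') ∪ f '' T ⊆ X + Y := by
            apply Set.union_subset
            · exact Set.add_subset_add_left Set.diff_subset
            · rintro _ ⟨y, hyT, rfl⟩
              exact (hfspec y hyT).1
          have hTenc : (f '' T).encard = ↑T.ncard := by
            rw [hfinj.encard_image, hTf.cast_ncard_eq]
          have hX1 : 1 ≤ X.ncard := (Set.ncard_pos hXf).mpr hXne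
          calc min m ↑(X.ncard + Y.ncard - 1)
              ≤ min m ↑(X.ncard + Y'.ncard - 1) + ↑T.ncard := by
                have heq : X.ncard + Y.ncard - 1 = (X.ncard + Y'.ncard - 1) + T.ncard := by
                  omega
                rw [heq, Nat.cast_add]
                rcases le_total m (↑(X.ncard + Y'.ncard - 1) : ℕ∞) with hm | hm
                · calc min m (↑(X.ncard + Y'.ncard - 1) + ↑T.ncard) ≤ m := min_le_left _ _
                    _ = min m ↑(X.ncard + Y'.ncard - 1) := (min_eq_left hm).symm
                    _ ≤ _ := le_self_add
                · calc min m (↑(X.ncard + Y'.ncard - 1) + ↑T.ncard)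
                      ≤ ↑(X.ncard + Y'.ncard - 1) + ↑T.ncard := min_le_right _ _
                    _ = min m ↑(X.ncard + Y'.ncard - 1) + ↑T.ncard := by
                        rw [min_eq_right hm]
            _ ≤ (X + Y').encard + ↑T.ncard := add_le_add_left hIH _
            _ = (X + Y').encard + (f '' T).encard := by rw [hTenc]
            _ = ((X + Y') ∪ f '' T).encard := (Set.encard_union_eq hdisj).symm
            _ ≤ (X + Y).encard := Set.encard_mono hsubU

private lemma CD_keylem (X Y : Set A) (hXne : X.Nonempty) (hXf : X.Finite) (hYf : Y.Finite)
    (hcm : ∀ a ∈ Y, ∀ b ∈ Y, a + b = b + a) (y₀ : A) (hy₀ : y₀ ∈ Y) (hu : IsUnitElem y₀) :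
    min (⨅ y ∈ {y ∈ Y | y ≠ y₀}, ord (y + neg y₀)) (X.encard + Y.encard - 1)
      ≤ (X + Y).encard := by
  obtain ⟨e, he, h1, h2⟩ : ∃ e, IsIdentity e ∧ y₀ + neg y₀ = e ∧ neg y₀ + y₀ = e := by
    simp only [neg, dif_pos hu]
    exact ⟨hu.choose, hu.choose_spec.choose_spec⟩
  set m := ⨅ y ∈ {y ∈ Y | y ≠ y₀}, ord (y + neg y₀) with hm
  set v := neg y₀ with hv
  have hvc : ∀ y ∈ Y, v + y = y + v := by
    intro y hy
    have hyc : y₀ + y = y + y₀ := hcm y₀ hy₀ y hy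
    calc v + y = v + (y + (y₀ + v)) := by rw [h1, (he y).1]
      _ = v + ((y₀ + y) + v) := by rw [← add_assoc y y₀ v, ← hyc]
      _ = ((v + y₀) + y) + v := by rw [← add_assoc, ← add_assoc]
      _ = y + v := by rw [h2, (he y).2]
  set Y' := (fun y => y + v) '' Y with hY'
  have heY' : e ∈ Y' := ⟨y₀, hy₀, h1⟩
  have hY'f : Y'.Finite := hYf.image _
  have hkey : ∀ a ∈ Y, ∀ b ∈ Y, (a + v) + (b + v) = ((a + b) + v) + v := by
    intro a ha b hb
    calc (a + v) + (b + v) = ((a + v) + b) + v := (add_assoc _ _ _).symm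
      _ = (a + (v + b)) + v := by rw [add_assoc a v b]
      _ = (a + (b + v)) + v := by rw [hvc b hb]
      _ = ((a + b) + v) + v := by rw [← add_assoc a b v]
  have hcm' : ∀ a ∈ Y', ∀ b ∈ Y', a + b = b + a := by
    rintro _ ⟨a, ha, rfl⟩ _ ⟨b, hb, rfl⟩
    rw [hkey a ha b hb, hkey b hb a ha, hcm a ha b hb]
  have hord' : ∀ y' ∈ Y', y' ≠ e → m ≤ ord y' := by
    rintro _ ⟨y, hy, rfl⟩ hne
    have hyne : y ≠ y₀ := by
      rintro rfl
      exact hne h1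
    exact iInf₂_le y ⟨hy, hyne⟩
  have hmain := CD_core e he m Y'.ncard X Y' hXf hY'f hXne heY' le_rfl hcm' hord'
  have himg : (fun w => w + y₀) '' (X + Y') = X + Y := by
    ext z
    constructor
    · rintro ⟨w, hw, rfl⟩
      rw [Set.mem_add] at hw
      obtain ⟨x, hx, y', hy', rfl⟩ := hw
      obtain ⟨y, hy, rfl⟩ := hy'
      have heq2 : (x + (y + v)) + y₀ = x + y := by
        rw [add_assoc, add_assoc, h2, (he y).1]
      show (x + (y + v)) + y₀ ∈ X + Y
      rw [heq2]
      exact Set.add_mem_add hx hy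
    · intro hz
      rw [Set.mem_add] at hz
      obtain ⟨x, hx, y, hy, rfl⟩ := hz
      refine ⟨x + (y + v), Set.add_mem_add hx ⟨y, hy, rfl⟩, ?_⟩
      show (x + (y + v)) + y₀ = x + y
      rw [add_assoc, add_assoc, h2, (he y).1]
  have henc : (X + Y').encard = (X + Y).encard := by
    rw [← himg, (add_left_injective y₀).encard_image _]
  have hYcard : Y'.ncard = Y.ncard := Set.ncard_image_of_injective Y (add_left_injective v)
  rw [henc, hYcard] at hmain
  have hcast : (↑(X.ncard + Y.ncard - 1) : ℕ∞) = X.encard + Y.encard - 1 := by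
    rw [ENat.coe_sub, Nat.cast_add, Nat.cast_one, hXf.cast_ncard_eq, hYf.cast_ncard_eq]
  rwa [hcast] at hmain

end CDProof


theorem stmt13 {A : Type*} [AddSemigroup A] [IsCancelAdd A] (X Y : Set A)
    (hX : X.Nonempty) (hcomm : CommOn (AddSubsemigroup.closure Y : Set A)) :
    min (gamma Y) (X.encard + Y.encard - 1) ≤ (X + Y).encard := by
  rcases le_or_gt (gamma Y) ((X + Y).encard) with h | h
  · exact le_trans (min_le_left _ _) h
  · by_cases hY1 : Y.encard ≤ 1
    · exfalso
      rw [gamma, if_pos hY1] at h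
      rcases Y.eq_empty_or_nonempty with rfl | hY
      · rw [Set.encard_empty] at h
        exact (not_lt_of_ge zero_le) h
      · have h1 : (1 : ℕ∞) ≤ Y.encard := Set.one_le_encard_iff_nonempty.mpr hY
        have hY1' : Y.encard = 1 := le_antisymm hY1 h1
        rw [hY1'] at h
        have : (1 : ℕ∞) ≤ (X + Y).encard :=
          Set.one_le_encard_iff_nonempty.mpr (hX.add hY)
        exact absurd h (not_lt_of_ge this)
    · rw [gamma, if_neg hY1, lt_iSup_iff] at h
      obtain ⟨y₀, h⟩ := h
      rw [lt_iSup_iff] at h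
      obtain ⟨hy₀, h⟩ := h
      have hYne : Y.Nonempty := ⟨y₀, hy₀.1⟩
      have hcne : (X + Y).encard ≠ ⊤ := h.ne_top
      have hXYf : (X + Y).Finite := Set.encard_ne_top_iff.mp hcne
      have hXf : X.Finite := by
        have hsub : (fun x => x + y₀) '' X ⊆ X + Y := by
          rintro _ ⟨x, hx, rfl⟩
          exact Set.add_mem_add hx hy₀.1
        exact Set.Finite.of_finite_image (hXYf.subset hsub) (add_left_injective y₀).injOn
      obtain ⟨x₀, hx₀⟩ := id hX
      have hYf : Y.Finite := by
        have hsub : (fun y => x₀ + y) '' Y ⊆ X + Y := by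
          rintro _ ⟨y, hy, rfl⟩
          exact Set.add_mem_add hx₀ hy
        exact Set.Finite.of_finite_image (hXYf.subset hsub) (add_right_injective x₀).injOn
      have hcm : ∀ a ∈ Y, ∀ b ∈ Y, a + b = b + a := fun a ha b hb =>
        hcomm a (AddSubsemigroup.subset_closure ha) b (AddSubsemigroup.subset_closure hb)
      have key := CD_keylem X Y hX hXf hYf hcm y₀ hy₀.1 hy₀.2
      have hle : X.encard + Y.encard - 1 ≤ (X + Y).encard := by
        by_contra hcon
        push_neg at hcon
        have := lt_min h hcon
        exact absurd key (not_le_of_gt this)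
      exact le_trans (min_le_right _ _) hle
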